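/- Let s* = −A^{-1}b where A = α²(Γ ⊗ Σ) + σ² I is positive definite with λ_min(A) ≥ σ² > 0, and let s̄ = −Ā^{-1}b where Ā = α²(Γ̄ ⊗ Σ) + σ² I is also positive definite with λ_min(Ā) ≥ σ², with α ≤ 1. Then ‖s̄ − s*‖₂ ≤ σ^{-4} ‖Σ‖_F · ‖Γ − Γ̄‖_F · ‖b‖₂. -/

import Mathlib

open Matrix Kronecker Finset

/-- Euclidean norm of a vector. -/
noncomputable def l2norm {ι : Type*} [Fintype ι] (v : ι → ℝ) : ℝ := Real.sqrt (v ⬝ᵥ v)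

/-- Frobenius norm of a matrix. -/
noncomputable def frobNorm {ι κ : Type*} [Fintype ι] [Fintype κ]
    (A : Matrix ι κ ℝ) : ℝ := Real.sqrt (∑ i, ∑ j, (A i j) ^ 2)

lemma l2norm_nonneg {ι : Type*} [Fintype ι] (v : ι → ℝ) : 0 ≤ l2norm v :=
  Real.sqrt_nonneg _

lemma frobNorm_nonneg {ι κ : Type*} [Fintype ι] [Fintype κ] (A : Matrix ι κ ℝ) :
    0 ≤ frobNorm A := Real.sqrt_nonneg _

lemma sq_l2norm {ι : Type*} [Fintype ι] (v : ι → ℝ) : l2norm v ^ 2 = v ⬝ᵥ v := by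
  rw [l2norm, Real.sq_sqrt]
  exact Finset.sum_nonneg fun i _ => mul_self_nonneg _

lemma dot_le_l2 {ι : Type*} [Fintype ι] (v w : ι → ℝ) : v ⬝ᵥ w ≤ l2norm v * l2norm w := by
  have h := Real.sum_mul_le_sqrt_mul_sqrt Finset.univ v w
  simpa [l2norm, dotProduct, pow_two] using h

/-- Inverse bound from the quadratic-form lower bound. -/
lemma inv_mulVec_bound {n : Type*} [Fintype n] [DecidableEq n]
    {A : Matrix n n ℝ} (hApd : A.PosDef) {σ : ℝ} (hσ : 0 < σ)
    (hmin : ∀ x : n → ℝ, σ ^ 2 * (x ⬝ᵥ x) ≤ x ⬝ᵥ A.mulVec x) (v : n → ℝ) :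
    l2norm (A⁻¹.mulVec v) ≤ (σ ^ 2)⁻¹ * l2norm v := by
  set y := A⁻¹.mulVec v with hy
  have hdet : IsUnit A.det := isUnit_iff_ne_zero.2 (ne_of_gt hApd.det_pos)
  have hAy : A.mulVec y = v := by
    rw [hy, Matrix.mulVec_mulVec, Matrix.mul_nonsing_inv A hdet, Matrix.one_mulVec]
  have h1 : σ ^ 2 * (y ⬝ᵥ y) ≤ y ⬝ᵥ v := by
    have := hmin y
    rwa [hAy] at this
  have h2 : σ ^ 2 * l2norm y ^ 2 ≤ l2norm y * l2norm v := by
    rw [sq_l2norm]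
    exact h1.trans (dot_le_l2 y v)
  have hσ2 : (0:ℝ) < σ ^ 2 := by positivity
  rcases eq_or_lt_of_le (l2norm_nonneg y) with h0 | h0
  · rw [← h0]
    exact mul_nonneg (by positivity) (l2norm_nonneg v)
  · have h3 : σ ^ 2 * l2norm y ≤ l2norm v := by nlinarith
    calc l2norm y = (σ ^ 2)⁻¹ * (σ ^ 2 * l2norm y) := by field_simp
      _ ≤ (σ ^ 2)⁻¹ * l2norm v := mul_le_mul_of_nonneg_left h3 (by positivity)

/-- Frobenius bound for matrix-vector multiplication. -/
lemma mulVec_l2_le {ι κ : Type*} [Fintype ι] [Fintype κ]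
    (M : Matrix ι κ ℝ) (v : κ → ℝ) :
    l2norm (M.mulVec v) ≤ frobNorm M * l2norm v := by
  have key : (M.mulVec v) ⬝ᵥ (M.mulVec v) ≤ (∑ i, ∑ j, (M i j) ^ 2) * (v ⬝ᵥ v) := by
    rw [dotProduct, Finset.sum_mul]
    apply Finset.sum_le_sum
    intro i _
    have h := Finset.sum_mul_sq_le_sq_mul_sq Finset.univ (fun j => M i j) v
    calc M.mulVec v i * M.mulVec v i = (∑ j, M i j * v j) ^ 2 := by
          rw [Matrix.mulVec, dotProduct, pow_two]
      _ ≤ (∑ j, (M i j) ^ 2) * ∑ j, (v j) ^ 2 := h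
      _ = (∑ j, (M i j) ^ 2) * (v ⬝ᵥ v) := by
          simp [dotProduct, pow_two]
  calc l2norm (M.mulVec v) ≤ Real.sqrt ((∑ i, ∑ j, (M i j) ^ 2) * (v ⬝ᵥ v)) :=
        Real.sqrt_le_sqrt key
    _ = frobNorm M * l2norm v := by
        rw [Real.sqrt_mul (Finset.sum_nonneg fun i _ => Finset.sum_nonneg fun j _ => sq_nonneg (M i j))]
        rfl

/-- Frobenius norm of a Kronecker product. -/
lemma frobNorm_kronecker {ι κ : Type*} [Fintype ι] [Fintype κ]
    (X : Matrix ι ι ℝ) (Y : Matrix κ κ ℝ) :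
    frobNorm (X ⊗ₖ Y) = frobNorm X * frobNorm Y := by
  rw [frobNorm, frobNorm, frobNorm, ← Real.sqrt_mul
    (Finset.sum_nonneg fun i _ => Finset.sum_nonneg fun j _ => sq_nonneg (X i j))]
  congr 1
  simp only [Fintype.sum_prod_type, Matrix.kroneckerMap_apply, mul_pow]
  rw [Finset.sum_mul]
  refine Finset.sum_congr rfl fun i _ => ?_
  calc ∑ k, ∑ j, ∑ l, (X i j) ^ 2 * (Y k l) ^ 2
      = ∑ k, ∑ j, (X i j) ^ 2 * ∑ l, (Y k l) ^ 2 := by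
        refine Finset.sum_congr rfl fun k _ => Finset.sum_congr rfl fun j _ => ?_
        rw [Finset.mul_sum]
    _ = ∑ j, ∑ k, (X i j) ^ 2 * ∑ l, (Y k l) ^ 2 := Finset.sum_comm
    _ = ∑ j, (X i j) ^ 2 * ∑ k, ∑ l, (Y k l) ^ 2 := by
        refine Finset.sum_congr rfl fun j _ => ?_
        rw [Finset.mul_sum]
    _ = (∑ j, (X i j) ^ 2) * ∑ k, ∑ l, (Y k l) ^ 2 := by rw [Finset.sum_mul]

/-- Truncated-score perturbation bound: with
`A = α²(Γ ⊗ Σ) + σ²I` and `Ā = α²(Γ̄ ⊗ Σ) + σ²I` both positive definite with smallest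
eigenvalue at least `σ² > 0`, `s* = -A⁻¹b`, `s̄ = -Ā⁻¹b`, and `0 ≤ α ≤ 1`,
`‖s̄ - s*‖₂ ≤ σ⁻⁴ ‖Σ‖_F ‖Γ - Γ̄‖_F ‖b‖₂`. -/
theorem truncated_score_bound {N d : ℕ}
    (Γ Γbar : Matrix (Fin N) (Fin N) ℝ) (S : Matrix (Fin d) (Fin d) ℝ)
    (hΓ : Γ.IsSymm) (hΓbar : Γbar.IsSymm) (hS : S.IsSymm)
    (α σ : ℝ) (hα0 : 0 ≤ α) (hα1 : α ≤ 1) (hσ : 0 < σ)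
    (A Abar : Matrix (Fin N × Fin d) (Fin N × Fin d) ℝ)
    (hA : A = α ^ 2 • (Γ ⊗ₖ S) + σ ^ 2 • 1)
    (hAbar : Abar = α ^ 2 • (Γbar ⊗ₖ S) + σ ^ 2 • 1)
    (hApd : A.PosDef) (hAbarpd : Abar.PosDef)
    (hAmin : ∀ x : Fin N × Fin d → ℝ, σ ^ 2 * (x ⬝ᵥ x) ≤ x ⬝ᵥ A.mulVec x)
    (hAbarmin : ∀ x : Fin N × Fin d → ℝ, σ ^ 2 * (x ⬝ᵥ x) ≤ x ⬝ᵥ Abar.mulVec x)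
    (b sstar sbar : Fin N × Fin d → ℝ)
    (hstar : sstar = -(A⁻¹.mulVec b)) (hbar : sbar = -(Abar⁻¹.mulVec b)) :
    l2norm (sbar - sstar) ≤ (σ ^ 4)⁻¹ * frobNorm S * frobNorm (Γ - Γbar) * l2norm b := by
  have hdetA : IsUnit A.det := isUnit_iff_ne_zero.2 (ne_of_gt hApd.det_pos)
  have hdetAbar : IsUnit Abar.det := isUnit_iff_ne_zero.2 (ne_of_gt hAbarpd.det_pos)
  set D : Matrix (Fin N × Fin d) (Fin N × Fin d) ℝ := α ^ 2 • ((Γbar - Γ) ⊗ₖ S) with hD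
  have hdiff : Abar - A = D := by
    rw [hA, hAbar, hD]
    ext p q
    simp [Matrix.sub_apply, Matrix.add_apply, Matrix.smul_apply, Matrix.kroneckerMap_apply,
      smul_eq_mul]
    ring
  have hkey : A⁻¹ - Abar⁻¹ = A⁻¹ * D * Abar⁻¹ := by
    have e1 : A⁻¹ * (Abar - A) * Abar⁻¹ = A⁻¹ * Abar * Abar⁻¹ - A⁻¹ * A * Abar⁻¹ := by
      rw [Matrix.mul_sub, Matrix.sub_mul]
    rw [← hdiff, e1, Matrix.mul_assoc A⁻¹ Abar, Matrix.mul_nonsing_inv Abar hdetAbar,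
      Matrix.mul_one, Matrix.nonsing_inv_mul A hdetA, Matrix.one_mul]
  have hvec : sbar - sstar = A⁻¹.mulVec (D.mulVec (Abar⁻¹.mulVec b)) := by
    have e2 : sbar - sstar = (A⁻¹ - Abar⁻¹).mulVec b := by
      rw [hbar, hstar, Matrix.sub_mulVec]
      abel
    rw [e2, hkey, ← Matrix.mulVec_mulVec, ← Matrix.mulVec_mulVec]
  have h1 : l2norm (sbar - sstar) ≤ (σ ^ 2)⁻¹ * l2norm (D.mulVec (Abar⁻¹.mulVec b)) := by
    rw [hvec]; exact inv_mulVec_bound hApd hσ hAmin _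
  have h2 : l2norm (D.mulVec (Abar⁻¹.mulVec b)) ≤ frobNorm D * l2norm (Abar⁻¹.mulVec b) :=
    mulVec_l2_le _ _
  have h3 : l2norm (Abar⁻¹.mulVec b) ≤ (σ ^ 2)⁻¹ * l2norm b :=
    inv_mulVec_bound hAbarpd hσ hAbarmin b
  have hfrobD : frobNorm D ≤ frobNorm S * frobNorm (Γ - Γbar) := by
    have hsmul : frobNorm D = α ^ 2 * frobNorm ((Γbar - Γ) ⊗ₖ S) := by
      rw [hD, frobNorm, frobNorm]
      rw [show (∑ i, ∑ j, ((α ^ 2 • ((Γbar - Γ) ⊗ₖ S)) i j) ^ 2)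
          = (α ^ 2) ^ 2 * ∑ i, ∑ j, (((Γbar - Γ) ⊗ₖ S) i j) ^ 2 by
        simp only [Matrix.smul_apply, smul_eq_mul, mul_pow, Finset.mul_sum]]
      rw [Real.sqrt_mul (by positivity), Real.sqrt_sq (by positivity)]
    have hneg : frobNorm (Γbar - Γ) = frobNorm (Γ - Γbar) := by
      rw [frobNorm, frobNorm]
      congr 1
      refine Finset.sum_congr rfl fun i _ => Finset.sum_congr rfl fun j _ => ?_
      rw [Matrix.sub_apply, Matrix.sub_apply]
      ring
    rw [hsmul, frobNorm_kronecker, hneg]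
    have hα2 : α ^ 2 ≤ 1 := by nlinarith
    nlinarith [frobNorm_nonneg (Γ - Γbar), frobNorm_nonneg S,
      mul_nonneg (frobNorm_nonneg (Γ - Γbar)) (frobNorm_nonneg S)]
  have hb : 0 ≤ l2norm b := l2norm_nonneg b
  have hσ2 : (0:ℝ) < (σ ^ 2)⁻¹ := by positivity
  have chain : l2norm (sbar - sstar) ≤ (σ ^ 2)⁻¹ * (frobNorm D * ((σ ^ 2)⁻¹ * l2norm b)) := by
    apply h1.trans
    apply mul_le_mul_of_nonneg_left _ (le_of_lt hσ2)
    apply h2.trans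
    exact mul_le_mul_of_nonneg_left h3 (frobNorm_nonneg _)
  apply chain.trans
  have heq : (σ ^ 4)⁻¹ * frobNorm S * frobNorm (Γ - Γbar) * l2norm b
      = (σ ^ 2)⁻¹ * ((frobNorm S * frobNorm (Γ - Γbar)) * ((σ ^ 2)⁻¹ * l2norm b)) := by
    rw [show (σ:ℝ) ^ 4 = σ ^ 2 * σ ^ 2 by ring, mul_inv]
    ring
  rw [heq]
  exact mul_le_mul_of_nonneg_left
    (mul_le_mul_of_nonneg_right hfrobD (mul_nonneg hσ2.le hb)) hσ2.le
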